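/- Fix β > 0. Let (N_k) be a strictly increasing sequence of integers and let J ↦ κ_J be a measurable map from the coupling space to Borel probability measures on P({−1,+1}^ℕ) such that for every s ∈ ℕ, every finite set A of pairs, every finite W ⊂ ℕ and every bounded continuous f, ∫ν(dJ) ∏_{i=1}^s G_{N_k,β,J}(dσ^i) f((J_{xy})_{(x,y)∈A}, σ^1|_W, …, σ^s|_W) → ∫ν(dJ) ∫κ_J(dΓ) ∏_{i=1}^s Γ(dσ^i) f((J_{xy})_{(x,y)∈A}, σ^1|_W, …, σ^s|_W) as k → ∞. Then for every s ∈ ℕ and every continuous F : [−1,1]^{s(s−1)/2} → ℝ, both limits lim_{k→∞} ∫ν(dJ) G_{N_k,β,J}^{⊗s}(F(R^{N_k}(σ^i,σ^j) : 1 ≤ i < j ≤ s)) and lim_{N→∞} ∫ν(dJ) ∫κ_J(dΓ) Γ^{⊗s}(F(R^{N}(σ^i,σ^j) : 1 ≤ i < j ≤ s)) exist and are equal. -/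

import Mathlib

open MeasureTheory ProbabilityTheory Filter
open scoped ENNReal

noncomputable section

/-- The spin value `±1` of a Boolean. -/
def spin (b : Bool) : ℝ := if b then 1 else -1

/-- `(1/√N) Σ_{0 ≤ x < y < N} J_{xy} σ_x σ_y`, i.e. minus the SK Hamiltonian `H_{N,J}`. -/
def skEnergy (N : ℕ) (J : ℕ × ℕ → ℝ) (σ : ℕ → Bool) : ℝ :=
  (Real.sqrt N)⁻¹ *
    ∑ p ∈ (Finset.range N ×ˢ Finset.range N).filter (fun p => p.1 < p.2),
      J p * spin (σ p.1) * spin (σ p.2)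

/-- Extend a configuration on `{0,…,N−1}` to `ℕ` by `+1`. -/
def extendN {N : ℕ} (σ : Fin N → Bool) : ℕ → Bool :=
  fun x => if h : x < N then σ ⟨x, h⟩ else true

/-- The SK Gibbs measure `G_{N,β,J}`, regarded as a measure on `{−1,+1}^ℕ`. -/
def skGibbs (N : ℕ) (β : ℝ) (J : ℕ × ℕ → ℝ) : Measure (ℕ → Bool) :=
  (∑ σ : Fin N → Bool, ENNReal.ofReal (Real.exp (β * skEnergy N J (extendN σ))))⁻¹ •
    ∑ σ : Fin N → Bool,
      ENNReal.ofReal (Real.exp (β * skEnergy N J (extendN σ))) • Measure.dirac (extendN σ)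

/-- The spin overlap `R^N(σ,σ′) = (1/N) Σ_{x<N} σ_x σ′_x`. -/
def overlapN (N : ℕ) (σ σ' : ℕ → Bool) : ℝ :=
  (N : ℝ)⁻¹ * ∑ x ∈ Finset.range N, spin (σ x) * spin (σ' x)

/-- `ν` is the product over the index set of standard Gaussians: all finite-dimensional
marginals are standard Gaussian product measures. -/
def stdGaussianProduct {ι : Type} (ν : Measure (ι → ℝ)) : Prop :=
  IsProbabilityMeasure ν ∧
    ∀ A : Finset ι, ν.map (fun J (e : ↥A) => J ↑e) = Measure.pi fun _ : ↥A => gaussianReal 0 1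

/-- The index set of pairs `1 ≤ i < j ≤ s` of replicas. -/
abbrev Pairs (s : ℕ) := {p : Fin s × Fin s // p.1 < p.2}

-- ### basic spin lemmas
lemma abs_spin (b : Bool) : |spin b| = 1 := by cases b <;> simp [spin]
lemma spin_mul_self (b : Bool) : spin b * spin b = 1 := by cases b <;> simp [spin]
lemma abs_spin_le (b : Bool) : |spin b| ≤ 1 := le_of_eq (abs_spin b)

lemma abs_overlapN_le (N : ℕ) (σ σ' : ℕ → Bool) : |overlapN N σ σ'| ≤ 1 := by
  rcases Nat.eq_zero_or_pos N with h | h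
  · simp [overlapN, h]
  · unfold overlapN
    rw [abs_mul]
    have h1 : |(N : ℝ)⁻¹| = (N : ℝ)⁻¹ := abs_of_nonneg (by positivity)
    calc |(N : ℝ)⁻¹| * |∑ x ∈ Finset.range N, spin (σ x) * spin (σ' x)|
        ≤ (N : ℝ)⁻¹ * ∑ x ∈ Finset.range N, 1 := by
          rw [h1]
          refine mul_le_mul_of_nonneg_left ?_ (by positivity)
          refine (Finset.abs_sum_le_sum_abs _ _).trans ?_
          refine Finset.sum_le_sum fun x _ => ?_
          rw [abs_mul, abs_spin, abs_spin]; norm_num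
      _ = 1 := by
          rw [Finset.sum_const, Finset.card_range]
          field_simp
          simp

-- ### cylinders
def restr (W : ℕ) (σ : ℕ → Bool) : Fin W → Bool := fun x => σ x

def cylW (W : ℕ) (c : Fin W → Bool) : Set (ℕ → Bool) := restr W ⁻¹' {c}

lemma measurable_restr (W : ℕ) : Measurable (restr W) :=
  measurable_pi_lambda _ fun x => measurable_pi_apply _

lemma measurableSet_cylW (W : ℕ) (c : Fin W → Bool) : MeasurableSet (cylW W c) :=
  (measurable_restr W) (MeasurableSet.singleton c)

lemma restr_extendN (W : ℕ) (c : Fin W → Bool) : restr W (extendN c) = c := by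
  funext x; simp [restr, extendN, x.isLt]

lemma extendN_mem_cylW {W : ℕ} {τ c : Fin W → Bool} : extendN τ ∈ cylW W c ↔ τ = c := by
  constructor
  · intro h
    have : restr W (extendN τ) = c := h
    rwa [restr_extendN] at this
  · rintro rfl; exact restr_extendN W τ

-- ### pi of maps
lemma pi_map_comm {ι : Type*} [Fintype ι] {α β : ι → Type*} [∀ i, MeasurableSpace (α i)]
    [∀ i, MeasurableSpace (β i)] (μ : ∀ i, Measure (α i)) [∀ i, IsProbabilityMeasure (μ i)]
    (f : ∀ i, α i → β i) (hf : ∀ i, Measurable (f i)) :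
    Measure.pi (fun i => (μ i).map (f i)) = (Measure.pi μ).map (fun a i => f i (a i)) := by
  haveI : ∀ i, IsProbabilityMeasure ((μ i).map (f i)) :=
    fun i => Measure.isProbabilityMeasure_map (hf i).aemeasurable
  haveI : ∀ i, SigmaFinite ((μ i).map (f i)) := fun i => inferInstance
  refine Measure.pi_eq (fun s hs => ?_)
  have hm : Measurable (fun (a : ∀ i, α i) i => f i (a i)) :=
    measurable_pi_lambda _ fun i => (hf i).comp (measurable_pi_apply i)
  rw [Measure.map_apply hm (MeasurableSet.univ_pi hs)]
  have : (fun (a : ∀ i, α i) i => f i (a i)) ⁻¹' (Set.univ.pi s)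
      = Set.univ.pi (fun i => f i ⁻¹' s i) := by
    ext a; simp [Set.mem_pi]
  rw [this, Measure.pi_pi]
  exact Finset.prod_congr rfl fun i _ => (Measure.map_apply (hf i) (hs i)).symm

-- ### the window integral formula
lemma window_integral (s W : ℕ) (Γ : Measure (ℕ → Bool)) [IsProbabilityMeasure Γ]
    (g : (Fin s → ℕ → Bool) → ℝ)
    (hg : ∀ σ σ', (∀ i, ∀ x, x < W → σ i x = σ' i x) → g σ = g σ') :
    ∫ σ, g σ ∂(Measure.pi fun _ : Fin s => Γ)
      = ∑ z : Fin s → Fin W → Bool,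
          (∏ i, (Γ (cylW W (z i))).toReal) * g (fun i => extendN (z i)) := by
  classical
  set φ : (Fin s → ℕ → Bool) → (Fin s → Fin W → Bool) := fun σ i => restr W (σ i) with hφ
  have hφm : Measurable φ :=
    measurable_pi_lambda _ fun i => (measurable_restr W).comp (measurable_pi_apply i)
  set gg : (Fin s → Fin W → Bool) → ℝ := fun z => g (fun i => extendN (z i)) with hgg
  have hgφ : ∀ σ, g σ = gg (φ σ) := by
    intro σ
    refine hg _ _ fun i x hx => ?_
    simp [hφ, gg, extendN, restr, hx]
  have key : (Measure.pi fun _ : Fin s => Γ).map φ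
      = Measure.pi (fun _ : Fin s => Γ.map (restr W)) := by
    rw [pi_map_comm (fun _ : Fin s => Γ) (fun _ => restr W) (fun _ => measurable_restr W)]
  calc ∫ σ, g σ ∂(Measure.pi fun _ : Fin s => Γ)
      = ∫ σ, gg (φ σ) ∂(Measure.pi fun _ : Fin s => Γ) := by
        refine integral_congr_ae (Filter.Eventually.of_forall fun σ => hgφ σ)
    _ = ∫ z, gg z ∂((Measure.pi fun _ : Fin s => Γ).map φ) := by
        rw [integral_map hφm.aemeasurable]
        exact (measurable_of_countable gg).aestronglyMeasurable
    _ = ∫ z, gg z ∂(Measure.pi (fun _ : Fin s => Γ.map (restr W))) := by rw [key]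
    _ = ∑ z : Fin s → Fin W → Bool,
          ((Measure.pi (fun _ : Fin s => Γ.map (restr W))) {z}).toReal • gg z := by
        haveI : IsProbabilityMeasure (Γ.map (restr W)) :=
          Measure.isProbabilityMeasure_map (measurable_restr W).aemeasurable
        exact integral_fintype Integrable.of_finite
    _ = ∑ z : Fin s → Fin W → Bool,
          (∏ i, (Γ (cylW W (z i))).toReal) * g (fun i => extendN (z i)) := by
        haveI : IsProbabilityMeasure (Γ.map (restr W)) :=
          Measure.isProbabilityMeasure_map (measurable_restr W).aemeasurable
        refine Finset.sum_congr rfl fun z _ => ?_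
        have h1 : ({z} : Set (Fin s → Fin W → Bool)) = Set.univ.pi (fun i => {z i}) := by
          ext a; simp [funext_iff, Set.mem_pi]
        rw [h1, Measure.pi_pi]
        have h2 : ∀ i : Fin s, (Γ.map (restr W)) {z i} = Γ (cylW W (z i)) := by
          intro i
          rw [Measure.map_apply (measurable_restr W) (MeasurableSet.singleton _)]
          rfl
        simp only [h2, ENNReal.toReal_prod, smul_eq_mul]
        rfl

-- ### Gibbs weights
variable (β : ℝ)

def eW (β : ℝ) (N : ℕ) (J : ℕ × ℕ → ℝ) (τ : Fin N → Bool) : ℝ :=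
  Real.exp (β * skEnergy N J (extendN τ))

def Zr (β : ℝ) (N : ℕ) (J : ℕ × ℕ → ℝ) : ℝ := ∑ τ : Fin N → Bool, eW β N J τ

def wr (β : ℝ) (N : ℕ) (J : ℕ × ℕ → ℝ) (τ : Fin N → Bool) : ℝ := eW β N J τ / Zr β N J

lemma eW_pos (N : ℕ) (J : ℕ × ℕ → ℝ) (τ : Fin N → Bool) : 0 < eW β N J τ := Real.exp_pos _

lemma Zr_pos (N : ℕ) (J : ℕ × ℕ → ℝ) : 0 < Zr β N J :=
  Finset.sum_pos (fun τ _ => eW_pos β N J τ) ⟨fun _ => true, Finset.mem_univ _⟩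

lemma wr_nonneg (N : ℕ) (J : ℕ × ℕ → ℝ) (τ : Fin N → Bool) : 0 ≤ wr β N J τ :=
  div_nonneg (eW_pos β N J τ).le (Zr_pos β N J).le

lemma sum_wr (N : ℕ) (J : ℕ × ℕ → ℝ) : ∑ τ : Fin N → Bool, wr β N J τ = 1 := by
  unfold wr
  rw [← Finset.sum_div]
  exact div_self (Zr_pos β N J).ne'

lemma skGibbs_eq (N : ℕ) (J : ℕ × ℕ → ℝ) :
    skGibbs N β J = (ENNReal.ofReal (Zr β N J))⁻¹ •
      ∑ τ : Fin N → Bool, ENNReal.ofReal (eW β N J τ) • Measure.dirac (extendN τ) := by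
  simp only [skGibbs, eW, Zr]
  rw [ENNReal.ofReal_sum_of_nonneg (fun (τ : Fin N → Bool) _ =>
    (Real.exp_pos (β * skEnergy N J (extendN τ))).le)]

lemma skGibbs_apply (N : ℕ) (J : ℕ × ℕ → ℝ) {A : Set (ℕ → Bool)} (hA : MeasurableSet A) :
    skGibbs N β J A = (ENNReal.ofReal (Zr β N J))⁻¹ *
      ∑ τ : Fin N → Bool, ENNReal.ofReal (eW β N J τ) * A.indicator 1 (extendN τ) := by
  rw [skGibbs_eq β N J, Measure.smul_apply, smul_eq_mul]
  congr 1
  rw [Measure.coe_finset_sum]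
  rw [Finset.sum_apply]
  refine Finset.sum_congr rfl fun τ _ => ?_
  rw [Measure.smul_apply, smul_eq_mul, Measure.dirac_apply' _ hA]

instance skGibbs_prob (N : ℕ) (J : ℕ × ℕ → ℝ) : IsProbabilityMeasure (skGibbs N β J) := by
  constructor
  rw [skGibbs_apply β N J MeasurableSet.univ]
  simp only [Set.indicator_univ, Pi.one_apply, mul_one]
  rw [← ENNReal.ofReal_sum_of_nonneg (fun τ _ => (eW_pos β N J τ).le)]
  exact ENNReal.inv_mul_cancel
    ((ENNReal.ofReal_pos.2 (Zr_pos β N J)).ne') ENNReal.ofReal_ne_top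

lemma skGibbs_cylW (N : ℕ) (J : ℕ × ℕ → ℝ) (c : Fin N → Bool) :
    skGibbs N β J (cylW N c) = ENNReal.ofReal (wr β N J c) := by
  rw [skGibbs_apply β N J (measurableSet_cylW N c)]
  have : ∀ τ : Fin N → Bool,
      (cylW N c).indicator (1 : (ℕ → Bool) → ℝ≥0∞) (extendN τ) = if τ = c then 1 else 0 := by
    intro τ
    by_cases h : τ = c
    · subst h
      rw [Set.indicator_of_mem (extendN_mem_cylW.2 rfl)]
      simp
    · simp [Set.indicator_of_notMem (fun hc => h (extendN_mem_cylW.1 hc)), h]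
  simp only [this, mul_ite, mul_one, mul_zero, Finset.sum_ite_eq', Finset.mem_univ, if_true]
  rw [wr, ENNReal.ofReal_div_of_pos (Zr_pos β N J), ENNReal.div_eq_inv_mul]

-- ### the finite Gibbs sum
def gibbsSum (β : ℝ) (s N : ℕ) (J : ℕ × ℕ → ℝ) (g : (Fin s → ℕ → Bool) → ℝ) : ℝ :=
  ∑ σ : Fin s → Fin N → Bool, (∏ i, wr β N J (σ i)) * g (fun i => extendN (σ i))

lemma integral_pi_skGibbs (s N : ℕ) (J : ℕ × ℕ → ℝ) (g : (Fin s → ℕ → Bool) → ℝ)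
    (hg : ∀ σ σ', (∀ i, ∀ x, x < N → σ i x = σ' i x) → g σ = g σ') :
    ∫ σ, g σ ∂(Measure.pi fun _ : Fin s => skGibbs N β J) = gibbsSum β s N J g := by
  rw [window_integral s N (skGibbs N β J) g hg]
  refine Finset.sum_congr rfl fun z _ => ?_
  congr 1
  refine Finset.prod_congr rfl fun i _ => ?_
  rw [skGibbs_cylW β N J (z i), ENNReal.toReal_ofReal (wr_nonneg β N J (z i))]

-- ### gibbsSum algebra
lemma gibbsSum_weights_nonneg (s N : ℕ) (J : ℕ × ℕ → ℝ) (σ : Fin s → Fin N → Bool) :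
    0 ≤ ∏ i, wr β N J (σ i) := Finset.prod_nonneg fun i _ => wr_nonneg β N J (σ i)

lemma gibbsSum_weights_sum (s N : ℕ) (J : ℕ × ℕ → ℝ) :
    ∑ σ : Fin s → Fin N → Bool, ∏ i, wr β N J (σ i) = 1 := by
  classical
  rw [← Fintype.piFinset_univ, ← Finset.prod_univ_sum]
  simp [sum_wr β N J]

lemma gibbsSum_const (s N : ℕ) (J : ℕ × ℕ → ℝ) (c : ℝ) :
    gibbsSum β s N J (fun _ => c) = c := by
  unfold gibbsSum
  rw [← Finset.sum_mul, gibbsSum_weights_sum, one_mul]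

lemma gibbsSum_sub (s N : ℕ) (J : ℕ × ℕ → ℝ) (g₁ g₂ : (Fin s → ℕ → Bool) → ℝ) :
    gibbsSum β s N J g₁ - gibbsSum β s N J g₂ = gibbsSum β s N J (fun σ => g₁ σ - g₂ σ) := by
  unfold gibbsSum
  rw [← Finset.sum_sub_distrib]
  exact Finset.sum_congr rfl fun σ _ => by ring

lemma gibbsSum_mono (s N : ℕ) (J : ℕ × ℕ → ℝ) {g₁ g₂ : (Fin s → ℕ → Bool) → ℝ}
    (h : ∀ σ, g₁ σ ≤ g₂ σ) : gibbsSum β s N J g₁ ≤ gibbsSum β s N J g₂ :=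
  Finset.sum_le_sum fun σ _ =>
    mul_le_mul_of_nonneg_left (h _) (gibbsSum_weights_nonneg β s N J σ)

lemma abs_gibbsSum_le (s N : ℕ) (J : ℕ × ℕ → ℝ) {g : (Fin s → ℕ → Bool) → ℝ} {C : ℝ}
    (h : ∀ σ, |g σ| ≤ C) : |gibbsSum β s N J g| ≤ C := by
  have h1 : |gibbsSum β s N J g| ≤ gibbsSum β s N J (fun σ => |g σ|) := by
    refine (Finset.abs_sum_le_sum_abs _ _).trans ?_
    refine Finset.sum_le_sum fun σ _ => ?_
    rw [abs_mul, abs_of_nonneg (gibbsSum_weights_nonneg β s N J σ)]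
  refine h1.trans ?_
  calc gibbsSum β s N J (fun σ => |g σ|) ≤ gibbsSum β s N J (fun _ => C) :=
        gibbsSum_mono β s N J fun σ => h _
    _ = C := gibbsSum_const β s N J C

lemma gibbsSum_finset_sum (s N : ℕ) (J : ℕ × ℕ → ℝ) {α : Type*} (T : Finset α)
    (h : α → (Fin s → ℕ → Bool) → ℝ) :
    gibbsSum β s N J (fun σ => ∑ x ∈ T, h x σ) = ∑ x ∈ T, gibbsSum β s N J (h x) := by
  unfold gibbsSum
  rw [Finset.sum_comm]
  exact Finset.sum_congr rfl fun σ _ => by rw [Finset.mul_sum]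

lemma gibbsSum_smul (s N : ℕ) (J : ℕ × ℕ → ℝ) (c : ℝ) (g : (Fin s → ℕ → Bool) → ℝ) :
    gibbsSum β s N J (fun σ => c * g σ) = c * gibbsSum β s N J g := by
  unfold gibbsSum
  rw [Finset.mul_sum]
  exact Finset.sum_congr rfl fun σ _ => by ring

-- ### continuity in J
lemma continuous_skEnergy (N : ℕ) (σ : ℕ → Bool) : Continuous fun J => skEnergy N J σ := by
  unfold skEnergy
  exact continuous_const.mul (continuous_finset_sum _ fun p _ =>
    ((continuous_apply p).mul continuous_const).mul continuous_const)

lemma continuous_gibbsSum (s N : ℕ) (g : (Fin s → ℕ → Bool) → ℝ) :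
    Continuous fun J => gibbsSum β s N J g := by
  have hw : ∀ τ : Fin N → Bool, Continuous fun J => wr β N J τ := by
    intro τ
    refine Continuous.div ?_ ?_ (fun J => (Zr_pos β N J).ne')
    · exact (continuous_const.mul (continuous_skEnergy N (extendN τ))).rexp
    · exact continuous_finset_sum _ fun τ' _ =>
        (continuous_const.mul (continuous_skEnergy N (extendN τ'))).rexp
  exact continuous_finset_sum _ fun σ _ =>
    (continuous_finset_prod _ fun i _ => hw (σ i)).mul continuous_const

-- ### site permutations and exchangeability
def EPairs (N : ℕ) : Finset (ℕ × ℕ) :=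
  (Finset.range N ×ˢ Finset.range N).filter (fun p => p.1 < p.2)

lemma mem_EPairs {N : ℕ} {p : ℕ × ℕ} :
    p ∈ EPairs N ↔ p.1 < N ∧ p.2 < N ∧ p.1 < p.2 := by
  simp [EPairs, Finset.mem_filter, Finset.mem_product, and_assoc]

lemma skEnergy_congr (N : ℕ) {J J' : ℕ × ℕ → ℝ} (h : ∀ p ∈ EPairs N, J p = J' p)
    (σ : ℕ → Bool) : skEnergy N J σ = skEnergy N J' σ := by
  unfold skEnergy
  congr 1
  exact Finset.sum_congr rfl fun p hp => by rw [h p hp]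

lemma gibbsSum_congr (s N : ℕ) {J J' : ℕ × ℕ → ℝ} (h : ∀ p ∈ EPairs N, J p = J' p)
    (g : (Fin s → ℕ → Bool) → ℝ) : gibbsSum β s N J g = gibbsSum β s N J' g := by
  have he : ∀ τ : Fin N → Bool, eW β N J τ = eW β N J' τ := fun τ => by
    unfold eW; rw [skEnergy_congr N h]
  have hZ : Zr β N J = Zr β N J' := Finset.sum_congr rfl fun τ _ => he τ
  have hwr : ∀ τ : Fin N → Bool, wr β N J τ = wr β N J' τ := fun τ => by
    unfold wr; rw [he, hZ]
  unfold gibbsSum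
  exact Finset.sum_congr rfl fun σ _ => by simp [hwr]

section Perm

variable {N : ℕ} (π : Equiv.Perm ℕ) (hπ : ∀ a, N ≤ a → π a = a)

def qmap (π : Equiv.Perm ℕ) (p : ℕ × ℕ) : ℕ × ℕ :=
  (min (π p.1) (π p.2), max (π p.1) (π p.2))

lemma perm_lt (hπ : ∀ a, N ≤ a → π a = a) {a : ℕ} (ha : a < N) : π a < N := by
  by_contra h
  push_neg at h
  have := hπ (π a) h
  have := π.injective this
  omega

lemma perm_symm_fix (hπ : ∀ a, N ≤ a → π a = a) : ∀ a, N ≤ a → π.symm a = a := by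
  intro a ha
  have := hπ a ha
  conv_lhs => rw [← this]
  exact π.symm_apply_apply a

lemma perm_symm_lt (hπ : ∀ a, N ≤ a → π a = a) {a : ℕ} (ha : a < N) : π.symm a < N :=
  perm_lt π.symm (perm_symm_fix π hπ) ha

lemma qmap_mem (hπ : ∀ a, N ≤ a → π a = a) {p : ℕ × ℕ} (hp : p ∈ EPairs N) :
    qmap π p ∈ EPairs N := by
  rw [mem_EPairs] at hp ⊢
  obtain ⟨h1, h2, h3⟩ := hp
  have hne : π p.1 ≠ π p.2 := fun h => absurd (π.injective h) (by omega)
  unfold qmap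
  refine ⟨?_, ?_, ?_⟩
  · exact lt_of_le_of_lt (min_le_left _ _) (perm_lt π hπ h1)
  · exact max_lt (perm_lt π hπ h1) (perm_lt π hπ h2)
  · exact min_lt_max.2 hne

lemma qmap_qmap_symm (hπ : ∀ a, N ≤ a → π a = a) {p : ℕ × ℕ} (hp : p ∈ EPairs N) :
    qmap π.symm (qmap π p) = p := by
  rw [mem_EPairs] at hp
  obtain ⟨h1, h2, h3⟩ := hp
  unfold qmap
  rcases le_or_gt (π p.1) (π p.2) with h | h
  · have hne : π p.1 ≠ π p.2 := fun hh => absurd (π.injective hh) (by omega)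
    simp only [min_eq_left h, max_eq_right h, Equiv.symm_apply_apply]
    rw [min_eq_left h3.le, max_eq_right h3.le]
  · simp only [min_eq_right h.le, max_eq_left h.le, Equiv.symm_apply_apply]
    rw [min_eq_right h3.le, max_eq_left h3.le]

lemma skEnergy_relabel (hπ : ∀ a, N ≤ a → π a = a) (J : ℕ × ℕ → ℝ) (σ : ℕ → Bool) :
    skEnergy N (fun p => J (qmap π p)) σ = skEnergy N J (fun a => σ (π.symm a)) := by
  unfold skEnergy
  congr 1
  refine Finset.sum_nbij' (qmap π) (qmap π.symm) (fun p hp => qmap_mem π hπ hp)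
    (fun p hp => qmap_mem π.symm (perm_symm_fix π hπ) hp)
    (fun p hp => qmap_qmap_symm π hπ hp)
    (fun p hp => ?_) (fun p hp => ?_)
  · have : qmap π.symm.symm (qmap π.symm p) = p :=
      qmap_qmap_symm π.symm (perm_symm_fix π hπ) hp
    simpa using this
  · unfold qmap
    rcases le_or_gt (π p.1) (π p.2) with h | h
    · simp only [min_eq_left h, max_eq_right h, Equiv.symm_apply_apply]
    · simp only [min_eq_right h.le, max_eq_left h.le, Equiv.symm_apply_apply]
      ring

def permConfig (hπ : ∀ a, N ≤ a → π a = a) : (Fin N → Bool) ≃ (Fin N → Bool) where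
  toFun τ := fun b => τ ⟨π.symm b, perm_symm_lt π hπ b.isLt⟩
  invFun τ := fun b => τ ⟨π b, perm_lt π hπ b.isLt⟩
  left_inv τ := by funext b; simp
  right_inv τ := by funext b; simp

lemma extendN_permConfig (hπ : ∀ a, N ≤ a → π a = a) (τ : Fin N → Bool) :
    extendN (permConfig π hπ τ) = fun a => extendN τ (π.symm a) := by
  funext a
  unfold extendN permConfig
  by_cases h : a < N
  · simp only [h, dif_pos]
    have h2 : π.symm a < N := perm_symm_lt π hπ h
    simp [h2]
  · have h2 : ¬ π.symm a < N := by
      intro hc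
      have := perm_lt π hπ hc
      rw [Equiv.apply_symm_apply] at this
      exact h this
    simp [h, h2]

lemma extendN_permConfig_symm (hπ : ∀ a, N ≤ a → π a = a) (τ : Fin N → Bool) :
    extendN ((permConfig π hπ).symm τ) = fun a => extendN τ (π a) := by
  funext a
  unfold extendN permConfig
  by_cases h : a < N
  · simp only [h, dif_pos]
    have h2 : π a < N := perm_lt π hπ h
    simp [h2]
  · have h2 : ¬ π a < N := by
      intro hc
      have := perm_symm_lt π hπ hc
      rw [Equiv.symm_apply_apply] at this
      exact h this
    simp [h, h2]

lemma eW_relabel (hπ : ∀ a, N ≤ a → π a = a) (J : ℕ × ℕ → ℝ) (τ : Fin N → Bool) :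
    eW β N (fun p => J (qmap π p)) τ = eW β N J (permConfig π hπ τ) := by
  unfold eW
  rw [skEnergy_relabel π hπ, extendN_permConfig π hπ]

lemma Zr_relabel (hπ : ∀ a, N ≤ a → π a = a) (J : ℕ × ℕ → ℝ) :
    Zr β N (fun p => J (qmap π p)) = Zr β N J := by
  unfold Zr
  exact Fintype.sum_equiv (permConfig π hπ) _ _ (fun τ => eW_relabel β π hπ J τ)

lemma wr_relabel (hπ : ∀ a, N ≤ a → π a = a) (J : ℕ × ℕ → ℝ) (τ : Fin N → Bool) :
    wr β N (fun p => J (qmap π p)) τ = wr β N J (permConfig π hπ τ) := by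
  unfold wr
  rw [eW_relabel β π hπ, Zr_relabel β π hπ]

lemma gibbsSum_relabel (s : ℕ) (hπ : ∀ a, N ≤ a → π a = a) (J : ℕ × ℕ → ℝ)
    (g : (Fin s → ℕ → Bool) → ℝ) :
    gibbsSum β s N (fun p => J (qmap π p)) g
      = gibbsSum β s N J (fun σ => g (fun i a => σ i (π a))) := by
  unfold gibbsSum
  refine Fintype.sum_equiv (Equiv.piCongrRight fun _ : Fin s => permConfig π hπ) _ _ ?_
  intro σ
  simp only [Equiv.piCongrRight_apply, Pi.map_apply]
  have hg : g (fun i => extendN (σ i))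
      = g (fun i a => extendN (permConfig π hπ (σ i)) (π a)) := by
    congr 1
    funext i a
    rw [extendN_permConfig π hπ (σ i)]
    simp
  rw [hg]
  congr 1
  exact Finset.prod_congr rfl fun i _ => wr_relabel β π hπ J (σ i)

end Perm

-- ### ν-exchangeability
def stdGaussianProduct' {ι : Type} (ν : Measure (ι → ℝ)) : Prop :=
  IsProbabilityMeasure ν ∧
    ∀ A : Finset ι, ν.map (fun J (e : ↥A) => J ↑e) = Measure.pi fun _ : ↥A => gaussianReal 0 1

def extE (A : Finset (ℕ × ℕ)) (c : ↥A → ℝ) : ℕ × ℕ → ℝ :=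
  fun p => if h : p ∈ A then c ⟨p, h⟩ else 0

lemma continuous_extE (A : Finset (ℕ × ℕ)) : Continuous (extE A) := by
  refine continuous_pi fun p => ?_
  unfold extE
  by_cases h : p ∈ A
  · simpa [h] using continuous_apply (⟨p, h⟩ : ↥A)
  · simpa [h] using continuous_const (y := (0 : ℝ))

lemma pi_map_comp_equiv {ι : Type*} [Fintype ι] {α : Type*} [MeasurableSpace α]
    (γ : Measure α) [IsProbabilityMeasure γ] (e : ι ≃ ι) :
    (Measure.pi fun _ : ι => γ).map (fun c => c ∘ e) = Measure.pi fun _ : ι => γ := by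
  have hm : Measurable (fun (c : ι → α) => c ∘ e) :=
    measurable_pi_lambda _ fun i => measurable_pi_apply _
  refine (Measure.pi_eq fun t ht => ?_).symm
  rw [Measure.map_apply hm (MeasurableSet.univ_pi ht)]
  have hpre : (fun (c : ι → α) => c ∘ e) ⁻¹' (Set.univ.pi t)
      = Set.univ.pi (fun j => t (e.symm j)) := by
    ext c
    simp only [Set.mem_preimage, Set.mem_pi, Set.mem_univ, forall_true_left, Function.comp]
    constructor
    · intro h j
      have := h (e.symm j)
      rwa [Equiv.apply_symm_apply] at this
    · intro h i
      simpa using h (e i)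
  rw [hpre, Measure.pi_pi]
  exact Equiv.prod_comp e.symm (fun i => γ (t i))

def eqE {N : ℕ} (π : Equiv.Perm ℕ) (hπ : ∀ a, N ≤ a → π a = a) :
    ↥(EPairs N) ≃ ↥(EPairs N) where
  toFun e := ⟨qmap π e, qmap_mem π hπ e.2⟩
  invFun e := ⟨qmap π.symm e, qmap_mem π.symm (perm_symm_fix π hπ) e.2⟩
  left_inv e := Subtype.ext (qmap_qmap_symm π hπ e.2)
  right_inv e := by
    refine Subtype.ext ?_
    have := qmap_qmap_symm π.symm (perm_symm_fix π hπ) e.2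
    simpa using this

lemma exchange (ν : Measure (ℕ × ℕ → ℝ)) (hν : stdGaussianProduct' ν)
    (s N : ℕ) (π : Equiv.Perm ℕ) (hπ : ∀ a, N ≤ a → π a = a)
    (g : (Fin s → ℕ → Bool) → ℝ) :
    ∫ J, gibbsSum β s N J g ∂ν
      = ∫ J, gibbsSum β s N J (fun σ => g (fun i a => σ i (π a))) ∂ν := by
  classical
  set A := EPairs N with hA
  set restrE : (ℕ × ℕ → ℝ) → (↥A → ℝ) := fun J (e : ↥A) => J ↑e with hrestrE
  have hrm : Measurable restrE := measurable_pi_lambda _ fun e => measurable_pi_apply _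
  set Φ : (↥A → ℝ) → ℝ := fun c => gibbsSum β s N (extE A c) g with hΦ
  have hΦc : Continuous Φ := (continuous_gibbsSum β s N g).comp (continuous_extE A)
  have hPhiJ : ∀ J, gibbsSum β s N J g = Φ (restrE J) := by
    intro J
    refine gibbsSum_congr β s N (fun p hp => ?_) g
    simp [hΦ, extE, hrestrE, (show p ∈ A from hp)]
  have hPhiJq : ∀ J, gibbsSum β s N (fun p => J (qmap π p)) g = Φ (restrE J ∘ eqE π hπ) := by
    intro J
    refine gibbsSum_congr β s N (fun p hp => ?_) g
    simp only [hΦ, extE, hrestrE, (show p ∈ A from hp), dif_pos]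
    rfl
  have hmap := hν.2 A
  have hcomp : Measurable (fun (c : ↥A → ℝ) => c ∘ eqE π hπ) :=
    measurable_pi_lambda _ fun e => measurable_pi_apply _
  calc ∫ J, gibbsSum β s N J g ∂ν
      = ∫ J, Φ (restrE J) ∂ν := integral_congr_ae (.of_forall fun J => hPhiJ J)
    _ = ∫ c, Φ c ∂(ν.map restrE) := by
        rw [integral_map hrm.aemeasurable hΦc.measurable.aestronglyMeasurable]
    _ = ∫ c, Φ c ∂(Measure.pi fun _ : ↥A => gaussianReal 0 1) := by rw [hmap]
    _ = ∫ c, Φ c ∂((Measure.pi fun _ : ↥A => gaussianReal 0 1).map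
          (fun c => c ∘ eqE π hπ)) := by rw [pi_map_comp_equiv]
    _ = ∫ c, Φ (c ∘ eqE π hπ) ∂(Measure.pi fun _ : ↥A => gaussianReal 0 1) := by
        rw [integral_map hcomp.aemeasurable]
        rw [pi_map_comp_equiv]
        exact hΦc.measurable.aestronglyMeasurable
    _ = ∫ c, Φ (c ∘ eqE π hπ) ∂(ν.map restrE) := by rw [hmap]
    _ = ∫ J, Φ (restrE J ∘ eqE π hπ) ∂ν := by
        exact integral_map (φ := restrE) (f := fun c => Φ (c ∘ ⇑(eqE π hπ)))
          hrm.aemeasurable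
          ((hΦc.comp (continuous_pi fun e =>
            continuous_apply ((eqE π hπ) e))).measurable.aestronglyMeasurable)
    _ = ∫ J, gibbsSum β s N (fun p => J (qmap π p)) g ∂ν :=
        integral_congr_ae (.of_forall fun J => (hPhiJq J).symm)
    _ = ∫ J, gibbsSum β s N J (fun σ => g (fun i a => σ i (π a))) ∂ν :=
        integral_congr_ae (.of_forall fun J => gibbsSum_relabel β π s hπ J g)

-- ### the replica pair correlation
def tFun (s : ℕ) (i j : Fin s) (x : ℕ) (σ : Fin s → ℕ → Bool) : ℝ :=
  spin (σ i x) * spin (σ j x)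

lemma tFun_sq (s : ℕ) (i j : Fin s) (x : ℕ) (σ : Fin s → ℕ → Bool) :
    tFun s i j x σ * tFun s i j x σ = 1 := by
  have : ∀ a b : Bool, (spin a * spin b) * (spin a * spin b) = 1 := by
    intro a b; cases a <;> cases b <;> norm_num [spin]
  exact this _ _

lemma abs_tFun_le (s : ℕ) (i j : Fin s) (x : ℕ) (σ : Fin s → ℕ → Bool) :
    |tFun s i j x σ| ≤ 1 := by
  unfold tFun
  rw [abs_mul, abs_spin, abs_spin]; norm_num

lemma integrable_gibbsSum (ν : Measure (ℕ × ℕ → ℝ)) [IsFiniteMeasure ν]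
    (s N : ℕ) (g : (Fin s → ℕ → Bool) → ℝ) (C : ℝ) (hC : ∀ σ, |g σ| ≤ C) :
    Integrable (fun J => gibbsSum β s N J g) ν := by
  refine Integrable.mono' (integrable_const C) ?_ ?_
  · exact (continuous_gibbsSum β s N g).measurable.aestronglyMeasurable
  · exact Filter.Eventually.of_forall fun J => by
      simpa [Real.norm_eq_abs] using abs_gibbsSum_le β s N J hC

lemma exists_perm_01 (N x y : ℕ) (h2 : 2 ≤ N) (hx : x < N) (hy : y < N) (hxy : x ≠ y) :
    ∃ π : Equiv.Perm ℕ, π 0 = x ∧ π 1 = y ∧ ∀ a, N ≤ a → π a = a := by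
  classical
  set s1 := Equiv.swap 0 x with hs1
  set w := s1 y with hw
  have hw0 : w ≠ 0 := by
    intro h
    have h1 : s1 0 = y := by rw [← h, hw, Equiv.swap_apply_self]
    rw [hs1, Equiv.swap_apply_left] at h1
    exact hxy h1
  set s2 := Equiv.swap 1 w with hs2
  refine ⟨s2.trans s1, ?_, ?_, ?_⟩
  · have h20 : s2 0 = 0 := Equiv.swap_apply_of_ne_of_ne (by norm_num) (Ne.symm hw0)
    simp [Equiv.trans_apply, h20, hs1, Equiv.swap_apply_left]
  · have h21 : s2 1 = w := Equiv.swap_apply_left 1 w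
    have hsw : s1 w = y := by rw [hw, Equiv.swap_apply_self]
    simp [Equiv.trans_apply, h21, hsw]
  · intro a ha
    have hwN : w < N := by
      rw [hw, hs1]
      rcases eq_or_ne y 0 with h | h
      · rw [h, Equiv.swap_apply_left]; exact hx
      · rcases eq_or_ne y x with h' | h'
        · rw [h', Equiv.swap_apply_right]; omega
        · rw [Equiv.swap_apply_of_ne_of_ne h h']; exact hy
    have h2a : s2 a = a := Equiv.swap_apply_of_ne_of_ne (by omega) (by omega)
    have h1a : s1 a = a := Equiv.swap_apply_of_ne_of_ne (by omega) (by omega)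
    simp [Equiv.trans_apply, h2a, h1a]

-- the correlation is exchangeable
lemma corr_exchange (ν : Measure (ℕ × ℕ → ℝ)) (hν : stdGaussianProduct' ν)
    (s Nn : ℕ) (i j : Fin s) (h2 : 2 ≤ Nn) {x y : ℕ} (hx : x < Nn) (hy : y < Nn)
    (hxy : x ≠ y) :
    ∫ J, gibbsSum β s Nn J (fun σ => tFun s i j x σ * tFun s i j y σ) ∂ν
      = ∫ J, gibbsSum β s Nn J (fun σ => tFun s i j 0 σ * tFun s i j 1 σ) ∂ν := by
  obtain ⟨π, hπ0, hπ1, hπfix⟩ := exists_perm_01 Nn x y h2 hx hy hxy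
  have hEx := exchange β ν hν s Nn π hπfix (fun σ => tFun s i j 0 σ * tFun s i j 1 σ)
  rw [hEx]
  have hfg : (fun σ : Fin s → ℕ → Bool => tFun s i j x σ * tFun s i j y σ)
      = (fun σ : Fin s → ℕ → Bool =>
          (fun σ : Fin s → ℕ → Bool => tFun s i j 0 σ * tFun s i j 1 σ)
            (fun i a => σ i (π a))) := by
    funext σ
    simp [tFun, hπ0, hπ1]
  rw [hfg]

-- coefficients for R_M - R_n
def dCoef (n M x : ℕ) : ℝ := if x < n then ((M : ℝ)⁻¹ - (n : ℝ)⁻¹) else (M : ℝ)⁻¹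

lemma overlap_diff (s : ℕ) (i j : Fin s) {n M : ℕ} (hnM : n ≤ M) (σ : Fin s → ℕ → Bool) :
    overlapN M (σ i) (σ j) - overlapN n (σ i) (σ j)
      = ∑ x ∈ Finset.range M, dCoef n M x * tFun s i j x σ := by
  unfold overlapN
  rw [Finset.mul_sum, Finset.mul_sum]
  have hsub : ∑ x ∈ Finset.range n, (n : ℝ)⁻¹ * (spin (σ i x) * spin (σ j x))
      = ∑ x ∈ Finset.range M,
          (if x < n then (n : ℝ)⁻¹ else 0) * (spin (σ i x) * spin (σ j x)) := by
    rw [← Finset.sum_subset (Finset.range_subset_range.2 hnM)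
      (fun x _ hxn => by rw [Finset.mem_range] at hxn; simp [hxn])]
    refine Finset.sum_congr rfl fun x hx => ?_
    rw [Finset.mem_range] at hx
    simp [hx]
  rw [hsub, ← Finset.sum_sub_distrib]
  refine Finset.sum_congr rfl fun x _ => ?_
  unfold dCoef tFun
  by_cases h : x < n <;> simp [h] <;> ring

lemma sum_dCoef {n M : ℕ} (hn : 1 ≤ n) (hnM : n ≤ M) :
    ∑ x ∈ Finset.range M, dCoef n M x = 0 := by
  have hM : 1 ≤ M := hn.trans hnM
  rw [Finset.range_eq_Ico, ← Finset.sum_Ico_consecutive _ (Nat.zero_le n) hnM]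
  have e1 : ∀ x ∈ Finset.Ico 0 n, dCoef n M x = (M : ℝ)⁻¹ - (n : ℝ)⁻¹ := fun x hx => by
    rw [Finset.mem_Ico] at hx; simp [dCoef, hx.2]
  have e2 : ∀ x ∈ Finset.Ico n M, dCoef n M x = (M : ℝ)⁻¹ := fun x hx => by
    rw [Finset.mem_Ico] at hx; simp [dCoef, not_lt.2 hx.1]
  rw [Finset.sum_congr rfl e1, Finset.sum_congr rfl e2, Finset.sum_const, Finset.sum_const,
    Nat.card_Ico, Nat.card_Ico, Nat.sub_zero]
  simp only [nsmul_eq_mul]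
  rw [Nat.cast_sub hnM]
  have hn0 : (n : ℝ) ≠ 0 := Nat.cast_ne_zero.2 (by omega)
  have hM0 : (M : ℝ) ≠ 0 := Nat.cast_ne_zero.2 (by omega)
  field_simp
  ring

lemma sum_dCoef_sq {n M : ℕ} (hn : 1 ≤ n) (hnM : n ≤ M) :
    ∑ x ∈ Finset.range M, dCoef n M x * dCoef n M x = (n : ℝ)⁻¹ - (M : ℝ)⁻¹ := by
  have hM : 1 ≤ M := hn.trans hnM
  rw [Finset.range_eq_Ico, ← Finset.sum_Ico_consecutive _ (Nat.zero_le n) hnM]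
  have e1 : ∀ x ∈ Finset.Ico 0 n, dCoef n M x * dCoef n M x
      = ((M : ℝ)⁻¹ - (n : ℝ)⁻¹) * ((M : ℝ)⁻¹ - (n : ℝ)⁻¹) := fun x hx => by
    rw [Finset.mem_Ico] at hx; simp [dCoef, hx.2]
  have e2 : ∀ x ∈ Finset.Ico n M, dCoef n M x * dCoef n M x
      = (M : ℝ)⁻¹ * (M : ℝ)⁻¹ := fun x hx => by
    rw [Finset.mem_Ico] at hx; simp [dCoef, not_lt.2 hx.1]
  rw [Finset.sum_congr rfl e1, Finset.sum_congr rfl e2, Finset.sum_const, Finset.sum_const,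
    Nat.card_Ico, Nat.card_Ico, Nat.sub_zero]
  simp only [nsmul_eq_mul]
  rw [Nat.cast_sub hnM]
  have hn0 : (n : ℝ) ≠ 0 := Nat.cast_ne_zero.2 (by omega)
  have hM0 : (M : ℝ) ≠ 0 := Nat.cast_ne_zero.2 (by omega)
  field_simp
  ring

lemma abs_tt_le (s : ℕ) (i j : Fin s) (x y : ℕ) (σ : Fin s → ℕ → Bool) :
    |tFun s i j x σ * tFun s i j y σ| ≤ 1 := by
  rw [abs_mul]
  exact mul_le_one₀ (abs_tFun_le s i j x σ) (abs_nonneg _) (abs_tFun_le s i j y σ)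

lemma var_bound (ν : Measure (ℕ × ℕ → ℝ)) [IsProbabilityMeasure ν]
    (hν : stdGaussianProduct' ν) (s : ℕ) (i j : Fin s) {n M Nn : ℕ}
    (hn : 1 ≤ n) (hnM : n ≤ M) (hMN : M ≤ Nn) (h2 : 2 ≤ Nn) :
    ∫ J, gibbsSum β s Nn J
        (fun σ => (overlapN M (σ i) (σ j) - overlapN n (σ i) (σ j))^2) ∂ν
      ≤ 2 / n := by
  classical
  set d : ℕ → ℝ := dCoef n M with hd
  set t : ℕ → (Fin s → ℕ → Bool) → ℝ := tFun s i j with ht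
  set aC : ℕ → ℕ → ℝ := fun x y => ∫ J, gibbsSum β s Nn J (fun σ => t x σ * t y σ) ∂ν
    with haC
  -- pointwise expansion of the square
  have hpt : ∀ σ : Fin s → ℕ → Bool,
      (overlapN M (σ i) (σ j) - overlapN n (σ i) (σ j))^2
        = ∑ x ∈ Finset.range M, ∑ y ∈ Finset.range M,
            (d x * d y) * (t x σ * t y σ) := by
    intro σ
    rw [pow_two, overlap_diff s i j hnM σ, Finset.sum_mul_sum]
    exact Finset.sum_congr rfl fun x _ => Finset.sum_congr rfl fun y _ => by ring
  -- gibbsSum expansion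
  have hgs : ∀ J, gibbsSum β s Nn J
      (fun σ => (overlapN M (σ i) (σ j) - overlapN n (σ i) (σ j))^2)
        = ∑ x ∈ Finset.range M, ∑ y ∈ Finset.range M,
            (d x * d y) * gibbsSum β s Nn J (fun σ => t x σ * t y σ) := by
    intro J
    have h1 : (fun σ : Fin s → ℕ → Bool =>
        (overlapN M (σ i) (σ j) - overlapN n (σ i) (σ j))^2)
        = fun σ => ∑ x ∈ Finset.range M, ∑ y ∈ Finset.range M,
            (d x * d y) * (t x σ * t y σ) := funext hpt
    rw [h1, gibbsSum_finset_sum]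
    refine Finset.sum_congr rfl fun x _ => ?_
    rw [gibbsSum_finset_sum]
    exact Finset.sum_congr rfl fun y _ => gibbsSum_smul β s Nn J _ _
  -- integrate
  have hint : ∀ x y : ℕ, Integrable
      (fun J => gibbsSum β s Nn J (fun σ => t x σ * t y σ)) ν :=
    fun x y => integrable_gibbsSum β ν s Nn _ 1 (fun σ => abs_tt_le s i j x y σ)
  have hswap : ∫ J, gibbsSum β s Nn J
      (fun σ => (overlapN M (σ i) (σ j) - overlapN n (σ i) (σ j))^2) ∂ν
        = ∑ x ∈ Finset.range M, ∑ y ∈ Finset.range M, (d x * d y) * aC x y := by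
    rw [integral_congr_ae (Filter.Eventually.of_forall hgs)]
    rw [integral_finset_sum _ (fun x _ => integrable_finset_sum _
      (fun y _ => ((hint x y).const_mul (d x * d y))))]
    refine Finset.sum_congr rfl fun x _ => ?_
    rw [integral_finset_sum _ (fun y _ => ((hint x y).const_mul (d x * d y)))]
    exact Finset.sum_congr rfl fun y _ => integral_const_mul _ _
  rw [hswap]
  -- the diagonal and off-diagonal values
  have hdiag : ∀ x : ℕ, aC x x = 1 := by
    intro x
    have h1 : (fun σ : Fin s → ℕ → Bool => t x σ * t x σ) = fun _ => (1 : ℝ) :=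
      funext fun σ => tFun_sq s i j x σ
    simp only [haC, h1, gibbsSum_const]
    simp
  set c : ℝ := aC 0 1 with hc
  have hoff : ∀ x y : ℕ, x < M → y < M → x ≠ y → aC x y = c := by
    intro x y hx hy hxy
    exact corr_exchange β ν hν s Nn i j h2 (lt_of_lt_of_le hx hMN)
      (lt_of_lt_of_le hy hMN) hxy
  have hcabs : |c| ≤ 1 := by
    rw [hc, haC]
    have := norm_integral_le_of_norm_le_const (μ := ν)
      (f := fun J => gibbsSum β s Nn J (fun σ => t 0 σ * t 1 σ)) (C := 1)
      (Filter.Eventually.of_forall fun J => by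
        simpa [Real.norm_eq_abs] using abs_gibbsSum_le β s Nn J
          (fun σ => abs_tt_le s i j 0 1 σ))
    simpa [Real.norm_eq_abs, measure_univ] using this
  -- rewrite each term
  have hterm : ∀ x ∈ Finset.range M, ∀ y ∈ Finset.range M,
      (d x * d y) * aC x y
        = (d x * c) * d y + (if y = x then (d x * d x) * (1 - c) else 0) := by
    intro x hx y hy
    rw [Finset.mem_range] at hx hy
    by_cases h : y = x
    · subst h
      rw [hdiag]
      simp
      ring
    · rw [hoff x y hx hy (fun hh => h hh.symm)]
      simp [h]
      ring
  have hT : ∑ x ∈ Finset.range M, ∑ y ∈ Finset.range M, (d x * d y) * aC x y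
      = ((n : ℝ)⁻¹ - (M : ℝ)⁻¹) * (1 - c) := by
    rw [Finset.sum_congr rfl (fun x hx => Finset.sum_congr rfl (fun y hy => hterm x hx y hy))]
    have hx1 : ∀ x ∈ Finset.range M,
        (∑ y ∈ Finset.range M, ((d x * c) * d y + (if y = x then (d x * d x) * (1 - c) else 0)))
          = (d x * d x) * (1 - c) := by
      intro x hx
      rw [Finset.sum_add_distrib, ← Finset.mul_sum, sum_dCoef hn hnM, mul_zero,
        Finset.sum_ite_eq' _ x _, if_pos hx, zero_add]
    rw [Finset.sum_congr rfl hx1, ← Finset.sum_mul, sum_dCoef_sq hn hnM]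
  rw [hT]
  -- final bound
  have hMpos : (0 : ℝ) < M := by exact_mod_cast lt_of_lt_of_le hn hnM
  have hnpos : (0 : ℝ) < n := by exact_mod_cast hn
  have h1 : (n : ℝ)⁻¹ - (M : ℝ)⁻¹ ≤ (n : ℝ)⁻¹ := by
    have : (0:ℝ) ≤ (M : ℝ)⁻¹ := by positivity
    linarith
  have h0 : (0 : ℝ) ≤ (n : ℝ)⁻¹ - (M : ℝ)⁻¹ := by
    have : (M : ℝ)⁻¹ ≤ (n : ℝ)⁻¹ := by
      apply inv_anti₀ hnpos
      exact_mod_cast hnM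
    linarith
  have hc1 : 1 - c ≤ 2 := by
    have := abs_le.1 hcabs
    linarith [this.1]
  have hc0 : (0 : ℝ) ≤ 1 - c := by
    have := abs_le.1 hcabs
    linarith [this.2]
  calc ((n : ℝ)⁻¹ - (M : ℝ)⁻¹) * (1 - c) ≤ (n : ℝ)⁻¹ * 2 :=
        mul_le_mul h1 hc1 hc0 (by positivity)
    _ = 2 / n := by ring

-- ### window functions: congruence, measurability, continuity
lemma overlapN_congr {m : ℕ} {σ σ' τ τ' : ℕ → Bool} (h1 : ∀ x, x < m → σ x = σ' x)
    (h2 : ∀ x, x < m → τ x = τ' x) : overlapN m σ τ = overlapN m σ' τ' := by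
  unfold overlapN
  congr 1
  refine Finset.sum_congr rfl fun x hx => ?_
  rw [Finset.mem_range] at hx
  rw [h1 x hx, h2 x hx]

lemma window_measurable (s W : ℕ) (g : (Fin s → ℕ → Bool) → ℝ)
    (hg : ∀ σ σ', (∀ i, ∀ x, x < W → σ i x = σ' i x) → g σ = g σ') : Measurable g := by
  have hgeq : g = (fun z : Fin s → Fin W → Bool => g (fun i => extendN (z i)))
      ∘ (fun σ i => restr W (σ i)) := by
    funext σ
    exact hg σ _ (fun i x hx => by simp [extendN, restr, hx])
  rw [hgeq]
  exact (measurable_of_countable _).comp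
    (measurable_pi_lambda _ fun i => (measurable_restr W).comp (measurable_pi_apply i))

lemma continuous_spin : Continuous spin := continuous_of_discreteTopology

lemma continuous_overlap_coord (s m : ℕ) (i j : Fin s) :
    Continuous fun σ : Fin s → ℕ → Bool => overlapN m (σ i) (σ j) := by
  unfold overlapN
  refine continuous_const.mul (continuous_finset_sum _ fun x _ => ?_)
  exact ((continuous_spin.comp ((continuous_apply x).comp (continuous_apply i)))).mul
    ((continuous_spin.comp ((continuous_apply x).comp (continuous_apply j))))

-- ### the cube and F
section FAnalysis

abbrev Pairs' (s : ℕ) := {p : Fin s × Fin s // p.1 < p.2}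

variable {s : ℕ} {F : (Pairs' s → ℝ) → ℝ}

def cube (s : ℕ) : Set (Pairs' s → ℝ) := {g : Pairs' s → ℝ | ∀ p, g p ∈ Set.Icc (-1 : ℝ) 1}

lemma cube_eq (s : ℕ) : cube s = Set.univ.pi (fun _ : Pairs' s => Set.Icc (-1 : ℝ) 1) := by
  ext g
  simp only [cube, Set.mem_setOf_eq, Set.mem_pi, Set.mem_univ, forall_true_left]

lemma isCompact_cube (s : ℕ) : IsCompact (cube s) := by
  rw [cube_eq]
  exact isCompact_univ_pi fun _ => isCompact_Icc

lemma exists_F_bound (hF : ContinuousOn F (cube s)) :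
    ∃ C : ℝ, 1 ≤ C ∧ ∀ u ∈ cube s, |F u| ≤ C := by
  obtain ⟨C, hC⟩ := (isCompact_cube s).exists_bound_of_continuousOn hF
  refine ⟨max C 1, le_max_right _ _, fun u hu => ?_⟩
  have := hC u hu
  rw [Real.norm_eq_abs] at this
  exact this.trans (le_max_left _ _)

lemma exists_F_modulus (hF : ContinuousOn F (cube s)) {ε : ℝ} (hε : 0 < ε) :
    ∃ δ : ℝ, 0 < δ ∧ ∀ u ∈ cube s, ∀ v ∈ cube s,
      (∀ p, |u p - v p| < δ) → |F u - F v| < ε := by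
  have huc : UniformContinuousOn F (cube s) :=
    (isCompact_cube s).uniformContinuousOn_of_continuous hF
  rw [Metric.uniformContinuousOn_iff] at huc
  obtain ⟨δ, hδ, h⟩ := huc ε hε
  refine ⟨δ, hδ, fun u hu v hv hclose => ?_⟩
  have hd : dist u v < δ := by
    rw [dist_pi_lt_iff hδ]
    intro p
    rw [Real.dist_eq]
    exact hclose p
  have := h u hu v hv hd
  rwa [Real.dist_eq] at this

lemma key_pointwise {C δ ε : ℝ} (hC1 : 1 ≤ C) (hδ : 0 < δ) (hε : 0 < ε)
    (hFb : ∀ u ∈ cube s, |F u| ≤ C)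
    (hmod : ∀ u ∈ cube s, ∀ v ∈ cube s, (∀ p, |u p - v p| < δ) → |F u - F v| < ε)
    {u v : Pairs' s → ℝ} (hu : u ∈ cube s) (hv : v ∈ cube s) :
    |F u - F v| ≤ ε + (2 * C / δ ^ 2) * ∑ p : Pairs' s, (u p - v p) ^ 2 := by
  have hsum0 : (0 : ℝ) ≤ ∑ p : Pairs' s, (u p - v p) ^ 2 :=
    Finset.sum_nonneg fun p _ => sq_nonneg _
  by_cases h : ∀ p, |u p - v p| < δ
  · have := hmod u hu v hv h
    have hpos : 0 ≤ (2 * C / δ ^ 2) * ∑ p : Pairs' s, (u p - v p) ^ 2 := by positivity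
    linarith
  · push_neg at h
    obtain ⟨p, hp⟩ := h
    have hsq : δ ^ 2 ≤ ∑ q : Pairs' s, (u q - v q) ^ 2 := by
      refine le_trans ?_ (Finset.single_le_sum (fun q _ => sq_nonneg (u q - v q))
        (Finset.mem_univ p))
      calc δ ^ 2 ≤ |u p - v p| ^ 2 := by
            exact pow_le_pow_left₀ hδ.le hp 2
        _ = (u p - v p) ^ 2 := sq_abs _
    have h2C : |F u - F v| ≤ 2 * C := by
      calc |F u - F v| ≤ |F u| + |F v| := abs_sub _ _
        _ ≤ C + C := add_le_add (hFb u hu) (hFb v hv)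
        _ = 2 * C := by ring
    have hmul : 2 * C ≤ (2 * C / δ ^ 2) * ∑ q : Pairs' s, (u q - v q) ^ 2 := by
      have := mul_le_mul_of_nonneg_left hsq (by positivity : (0:ℝ) ≤ 2 * C / δ ^ 2)
      calc 2 * C = (2 * C / δ ^ 2) * δ ^ 2 := by field_simp
        _ ≤ _ := this
    linarith

lemma overlap_vec_mem_cube (s m : ℕ) (σ : Fin s → ℕ → Bool) :
    (fun p : Pairs' s => overlapN m (σ p.1.1) (σ p.1.2)) ∈ cube s := by
  intro p
  exact abs_le.1 (abs_overlapN_le m _ _)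

end FAnalysis

-- ### integral comparison helper
lemma integral_abs_diff_le {α : Type*} [MeasurableSpace α] (μ : Measure α)
    [IsProbabilityMeasure μ] {f1 f2 h : α → ℝ} {e c : ℝ}
    (hf1 : Integrable f1 μ) (hf2 : Integrable f2 μ) (hh : Integrable h μ)
    (hb : ∀ᵐ a ∂μ, |f1 a - f2 a| ≤ e + c * h a) :
    |∫ a, f1 a ∂μ - ∫ a, f2 a ∂μ| ≤ e + c * ∫ a, h a ∂μ := by
  rw [← integral_sub hf1 hf2]
  refine le_trans (by
    have := MeasureTheory.norm_integral_le_integral_norm (μ := μ) (fun a => f1 a - f2 a)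
    simpa [Real.norm_eq_abs] using this) ?_
  calc ∫ a, |f1 a - f2 a| ∂μ ≤ ∫ a, (e + c * h a) ∂μ :=
        integral_mono_ae (hf1.sub hf2).abs ((integrable_const e).add (hh.const_mul c)) hb
    _ = e + c * ∫ a, h a ∂μ := by
        rw [integral_add (integrable_const e) (hh.const_mul c), integral_const,
          integral_const_mul]
        simp [measure_univ]

-- ### more gibbsSum algebra
lemma abs_gibbsSum_le_abs (s N : ℕ) (J : ℕ × ℕ → ℝ) (g : (Fin s → ℕ → Bool) → ℝ) :
    |gibbsSum β s N J g| ≤ gibbsSum β s N J (fun σ => |g σ|) := by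
  refine (Finset.abs_sum_le_sum_abs _ _).trans ?_
  refine Finset.sum_le_sum fun σ _ => ?_
  rw [abs_mul, abs_of_nonneg (gibbsSum_weights_nonneg β s N J σ)]

lemma gibbsSum_add (s N : ℕ) (J : ℕ × ℕ → ℝ) (g₁ g₂ : (Fin s → ℕ → Bool) → ℝ) :
    gibbsSum β s N J (fun σ => g₁ σ + g₂ σ) = gibbsSum β s N J g₁ + gibbsSum β s N J g₂ := by
  unfold gibbsSum
  rw [← Finset.sum_add_distrib]
  exact Finset.sum_congr rfl fun σ _ => by ring

-- ### the window functional on measures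
def SF (s W : ℕ) (g : (Fin s → ℕ → Bool) → ℝ) (Γ : Measure (ℕ → Bool)) : ℝ :=
  ∑ z : Fin s → Fin W → Bool, (∏ i, (Γ (cylW W (z i))).toReal) * g (fun i => extendN (z i))

lemma SF_eq (s W : ℕ) (g : (Fin s → ℕ → Bool) → ℝ)
    (hg : ∀ σ σ', (∀ i, ∀ x, x < W → σ i x = σ' i x) → g σ = g σ')
    (Γ : Measure (ℕ → Bool)) [IsProbabilityMeasure Γ] :
    ∫ σ, g σ ∂(Measure.pi fun _ : Fin s => Γ) = SF s W g Γ :=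
  window_integral s W Γ g hg

lemma measurable_SF (s W : ℕ) (g : (Fin s → ℕ → Bool) → ℝ) : Measurable (SF s W g) := by
  refine Finset.measurable_sum _ fun z _ => ?_
  exact (Finset.measurable_prod _ fun i _ =>
    (Measure.measurable_coe (measurableSet_cylW W (z i))).ennreal_toReal).mul_const _

lemma cyl_toReal_le_one {W : ℕ} (Γ : Measure (ℕ → Bool)) [IsProbabilityMeasure Γ]
    (c : Fin W → Bool) : (Γ (cylW W c)).toReal ≤ 1 := by
  have h1 : Γ (cylW W c) ≤ 1 := prob_le_one
  calc (Γ (cylW W c)).toReal ≤ (1 : ℝ≥0∞).toReal :=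
        ENNReal.toReal_mono (by norm_num) h1
    _ = 1 := by norm_num

lemma SF_weights_nonneg (s W : ℕ) (Γ : Measure (ℕ → Bool)) (z : Fin s → Fin W → Bool) :
    0 ≤ ∏ i, (Γ (cylW W (z i))).toReal :=
  Finset.prod_nonneg fun i _ => ENNReal.toReal_nonneg

lemma sum_cylW (W : ℕ) (Γ : Measure (ℕ → Bool)) [IsProbabilityMeasure Γ] :
    ∑ c : Fin W → Bool, (Γ (cylW W c)).toReal = 1 := by
  haveI : IsProbabilityMeasure (Γ.map (restr W)) :=
    Measure.isProbabilityMeasure_map (measurable_restr W).aemeasurable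
  have h1 : ∀ c : Fin W → Bool, Γ (cylW W c) = (Γ.map (restr W)) {c} := fun c => by
    rw [Measure.map_apply (measurable_restr W) (MeasurableSet.singleton _)]
    rfl
  simp only [h1]
  rw [← ENNReal.toReal_sum (fun c _ => measure_ne_top _ _)]
  have h2 : ∑ c : Fin W → Bool, (Γ.map (restr W)) {c} = (Γ.map (restr W)) Set.univ := by
    have hu : (Set.univ : Set (Fin W → Bool))
        = ⋃ c ∈ (Finset.univ : Finset (Fin W → Bool)), {c} := by
      ext x; simp
    rw [hu, measure_biUnion_finset ?_ (fun c _ => measurableSet_singleton c)]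
    intro a _ b _ hab
    simp [Set.disjoint_singleton, hab]
  rw [h2]
  simp [measure_univ]

lemma sum_prod_eq_prod_sum {ι κ : Type*} [Fintype ι] [DecidableEq ι] [Fintype κ]
    (w : ι → κ → ℝ) : ∑ z : ι → κ, ∏ i, w i (z i) = ∏ i, ∑ c, w i c := by
  rw [Finset.prod_univ_sum]
  rw [← Fintype.piFinset_univ]

lemma SF_weights_sum (s W : ℕ) (Γ : Measure (ℕ → Bool)) [IsProbabilityMeasure Γ] :
    ∑ z : Fin s → Fin W → Bool, ∏ i, (Γ (cylW W (z i))).toReal = 1 := by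
  classical
  rw [sum_prod_eq_prod_sum (fun (_ : Fin s) (c : Fin W → Bool) => (Γ (cylW W c)).toReal)]
  simp [sum_cylW W Γ]

lemma SF_const (s W : ℕ) (Γ : Measure (ℕ → Bool)) [IsProbabilityMeasure Γ] (c : ℝ) :
    SF s W (fun _ => c) Γ = c := by
  unfold SF
  rw [← Finset.sum_mul, SF_weights_sum, one_mul]

lemma SF_sub (s W : ℕ) (Γ : Measure (ℕ → Bool)) (g₁ g₂ : (Fin s → ℕ → Bool) → ℝ) :
    SF s W g₁ Γ - SF s W g₂ Γ = SF s W (fun σ => g₁ σ - g₂ σ) Γ := by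
  unfold SF
  rw [← Finset.sum_sub_distrib]
  exact Finset.sum_congr rfl fun z _ => by ring

lemma SF_mono (s W : ℕ) (Γ : Measure (ℕ → Bool)) {g₁ g₂ : (Fin s → ℕ → Bool) → ℝ}
    (h : ∀ σ, g₁ σ ≤ g₂ σ) : SF s W g₁ Γ ≤ SF s W g₂ Γ :=
  Finset.sum_le_sum fun z _ =>
    mul_le_mul_of_nonneg_left (h _) (SF_weights_nonneg s W Γ z)

lemma abs_SF_le_abs (s W : ℕ) (Γ : Measure (ℕ → Bool)) (g : (Fin s → ℕ → Bool) → ℝ) :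
    |SF s W g Γ| ≤ SF s W (fun σ => |g σ|) Γ := by
  refine (Finset.abs_sum_le_sum_abs _ _).trans ?_
  refine Finset.sum_le_sum fun z _ => ?_
  rw [abs_mul, abs_of_nonneg (SF_weights_nonneg s W Γ z)]

lemma abs_SF_le (s W : ℕ) (Γ : Measure (ℕ → Bool)) [IsProbabilityMeasure Γ]
    {g : (Fin s → ℕ → Bool) → ℝ} {C : ℝ} (h : ∀ σ, |g σ| ≤ C) : |SF s W g Γ| ≤ C := by
  refine (abs_SF_le_abs s W Γ g).trans ?_
  calc SF s W (fun σ => |g σ|) Γ ≤ SF s W (fun _ => C) Γ := SF_mono s W Γ fun σ => h _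
    _ = C := SF_const s W Γ C

lemma SF_smul (s W : ℕ) (Γ : Measure (ℕ → Bool)) (c : ℝ) (g : (Fin s → ℕ → Bool) → ℝ) :
    SF s W (fun σ => c * g σ) Γ = c * SF s W g Γ := by
  unfold SF
  rw [Finset.mul_sum]
  exact Finset.sum_congr rfl fun z _ => by ring

lemma SF_add (s W : ℕ) (Γ : Measure (ℕ → Bool)) (g₁ g₂ : (Fin s → ℕ → Bool) → ℝ) :
    SF s W (fun σ => g₁ σ + g₂ σ) Γ = SF s W g₁ Γ + SF s W g₂ Γ := by
  unfold SF
  rw [← Finset.sum_add_distrib]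
  exact Finset.sum_congr rfl fun z _ => by ring

-- crude global bound (no probability assumption needed in the statement's use is a.e.)
lemma measurable_kernel_integral (κ : (ℕ × ℕ → ℝ) → Measure (Measure (ℕ → Bool)))
    (hκmeas : Measurable κ) (hκprob : ∀ J, IsProbabilityMeasure (κ J))
    (h : Measure (ℕ → Bool) → ℝ) (hh : Measurable h) :
    Measurable fun J => ∫ Γ, h Γ ∂κ J := by
  let k : ProbabilityTheory.Kernel (ℕ × ℕ → ℝ) (Measure (ℕ → Bool)) := ⟨κ, hκmeas⟩
  haveI : ProbabilityTheory.IsMarkovKernel k := ⟨fun a => hκprob a⟩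
  have hsm : StronglyMeasurable (Function.uncurry fun (_ : ℕ × ℕ → ℝ) Γ => h Γ) :=
    (hh.comp measurable_snd).stronglyMeasurable
  exact (MeasureTheory.StronglyMeasurable.integral_kernel_prod_right
    (κ := k) (f := fun _ Γ => h Γ) hsm).measurable

-- ### the specific test functions
section TestFunctions

variable {s : ℕ} (F : (Pairs' s → ℝ) → ℝ)

def gFm (s : ℕ) (F : (Pairs' s → ℝ) → ℝ) (m : ℕ) (σ : Fin s → ℕ → Bool) : ℝ :=
  F (fun p => overlapN m (σ p.1.1) (σ p.1.2))

def sqFd (s : ℕ) (n m : ℕ) (σ : Fin s → ℕ → Bool) : ℝ :=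
  ∑ p : Pairs' s, (overlapN m (σ p.1.1) (σ p.1.2) - overlapN n (σ p.1.1) (σ p.1.2))^2

lemma gFm_window {m W : ℕ} (hmW : m ≤ W) :
    ∀ σ σ', (∀ i, ∀ x, x < W → σ i x = σ' i x) → gFm s F m σ = gFm s F m σ' := by
  intro σ σ' h
  unfold gFm
  congr 1
  funext p
  exact overlapN_congr (fun x hx => h _ x (lt_of_lt_of_le hx hmW))
    (fun x hx => h _ x (lt_of_lt_of_le hx hmW))

lemma sqFd_window {n m W : ℕ} (hmW : m ≤ W) (hnm : n ≤ m) :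
    ∀ σ σ', (∀ i, ∀ x, x < W → σ i x = σ' i x) → sqFd s n m σ = sqFd s n m σ' := by
  intro σ σ' h
  unfold sqFd
  refine Finset.sum_congr rfl fun p _ => ?_
  have h1 := overlapN_congr (σ := σ p.1.1) (σ' := σ' p.1.1) (τ := σ p.1.2) (τ' := σ' p.1.2)
    (m := m) (fun x hx => h _ x (lt_of_lt_of_le hx hmW)) (fun x hx => h _ x (lt_of_lt_of_le hx hmW))
  have h2 := overlapN_congr (σ := σ p.1.1) (σ' := σ' p.1.1) (τ := σ p.1.2) (τ' := σ' p.1.2)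
    (m := n) (fun x hx => h _ x (lt_of_lt_of_le (lt_of_lt_of_le hx hnm) hmW))
    (fun x hx => h _ x (lt_of_lt_of_le (lt_of_lt_of_le hx hnm) hmW))
  rw [h1, h2]

lemma gFm_bound {C : ℝ} (hFb : ∀ u ∈ cube s, |F u| ≤ C) (m : ℕ) (σ : Fin s → ℕ → Bool) :
    |gFm s F m σ| ≤ C := hFb _ (overlap_vec_mem_cube s m σ)

lemma sqFd_nonneg (n m : ℕ) (σ : Fin s → ℕ → Bool) : 0 ≤ sqFd s n m σ :=
  Finset.sum_nonneg fun p _ => sq_nonneg _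

lemma sqFd_bound (n m : ℕ) (σ : Fin s → ℕ → Bool) :
    |sqFd s n m σ| ≤ 4 * (Fintype.card (Pairs' s) : ℝ) := by
  rw [abs_of_nonneg (sqFd_nonneg n m σ)]
  unfold sqFd
  calc ∑ p : Pairs' s, (overlapN m (σ p.1.1) (σ p.1.2) - overlapN n (σ p.1.1) (σ p.1.2))^2
      ≤ ∑ _p : Pairs' s, 4 := by
        refine Finset.sum_le_sum fun p _ => ?_
        have h1 := abs_overlapN_le m (σ p.1.1) (σ p.1.2)
        have h2 := abs_overlapN_le n (σ p.1.1) (σ p.1.2)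
        rw [abs_le] at h1 h2
        nlinarith [h1.1, h1.2, h2.1, h2.2]
    _ = 4 * (Fintype.card (Pairs' s) : ℝ) := by
        rw [Finset.sum_const, Finset.card_univ, nsmul_eq_mul]
        ring

lemma gFm_continuous (hF : ContinuousOn F (cube s)) (m : ℕ) :
    Continuous (gFm s F m) := by
  have hφ : Continuous fun σ : Fin s → ℕ → Bool =>
      (fun p : Pairs' s => overlapN m (σ p.1.1) (σ p.1.2)) :=
    continuous_pi fun p => continuous_overlap_coord s m p.1.1 p.1.2
  exact hF.comp_continuous hφ (fun σ => overlap_vec_mem_cube s m σ)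

lemma sqFd_continuous (n m : ℕ) : Continuous (sqFd s n m) := by
  refine continuous_finset_sum _ fun p _ => ?_
  exact ((continuous_overlap_coord s m p.1.1 p.1.2).sub
    (continuous_overlap_coord s n p.1.1 p.1.2)).pow 2

-- pointwise comparison
lemma gFm_ptwise {C δ ε : ℝ} (hC1 : 1 ≤ C) (hδ : 0 < δ) (hε : 0 < ε)
    (hFb : ∀ u ∈ cube s, |F u| ≤ C)
    (hmod : ∀ u ∈ cube s, ∀ v ∈ cube s, (∀ p, |u p - v p| < δ) → |F u - F v| < ε)
    (n m : ℕ) (σ : Fin s → ℕ → Bool) :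
    |gFm s F m σ - gFm s F n σ| ≤ ε + (2 * C / δ ^ 2) * sqFd s n m σ :=
  key_pointwise hC1 hδ hε hFb hmod (overlap_vec_mem_cube s m σ) (overlap_vec_mem_cube s n σ)

-- the SF-level comparison, for a probability measure Γ
lemma SF_gFm_ptwise {C δ ε : ℝ} (hC1 : 1 ≤ C) (hδ : 0 < δ) (hε : 0 < ε)
    (hFb : ∀ u ∈ cube s, |F u| ≤ C)
    (hmod : ∀ u ∈ cube s, ∀ v ∈ cube s, (∀ p, |u p - v p| < δ) → |F u - F v| < ε)
    {n m : ℕ} (hnm : n ≤ m) (Γ : Measure (ℕ → Bool)) [IsProbabilityMeasure Γ] :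
    |SF s m (gFm s F m) Γ - SF s n (gFm s F n) Γ|
      ≤ ε + (2 * C / δ ^ 2) * SF s m (sqFd s n m) Γ := by
  have hn : SF s n (gFm s F n) Γ = SF s m (gFm s F n) Γ := by
    rw [← SF_eq s n (gFm s F n) (gFm_window F le_rfl) Γ,
      SF_eq s m (gFm s F n) (gFm_window F hnm) Γ]
  rw [hn, SF_sub]
  refine (abs_SF_le_abs s m Γ _).trans ?_
  have h1 : SF s m (fun σ => |gFm s F m σ - gFm s F n σ|) Γ
      ≤ SF s m (fun σ => ε + (2 * C / δ ^ 2) * sqFd s n m σ) Γ :=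
    SF_mono s m Γ fun σ => gFm_ptwise F hC1 hδ hε hFb hmod n m σ
  refine h1.trans ?_
  rw [SF_add s m Γ (fun _ => ε) (fun σ => (2 * C / δ ^ 2) * sqFd s n m σ),
    SF_const, SF_smul]

-- the gibbsSum-level comparison
lemma gibbs_gFm_ptwise {C δ ε : ℝ} (hC1 : 1 ≤ C) (hδ : 0 < δ) (hε : 0 < ε)
    (hFb : ∀ u ∈ cube s, |F u| ≤ C)
    (hmod : ∀ u ∈ cube s, ∀ v ∈ cube s, (∀ p, |u p - v p| < δ) → |F u - F v| < ε)
    (β : ℝ) (n m W : ℕ) (J : ℕ × ℕ → ℝ) :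
    |gibbsSum β s W J (gFm s F m) - gibbsSum β s W J (gFm s F n)|
      ≤ ε + (2 * C / δ ^ 2) * gibbsSum β s W J (sqFd s n m) := by
  rw [gibbsSum_sub]
  refine (abs_gibbsSum_le_abs β s W J _).trans ?_
  have h1 : gibbsSum β s W J (fun σ => |gFm s F m σ - gFm s F n σ|)
      ≤ gibbsSum β s W J (fun σ => ε + (2 * C / δ ^ 2) * sqFd s n m σ) :=
    gibbsSum_mono β s W J fun σ => gFm_ptwise F hC1 hδ hε hFb hmod n m σ
  refine h1.trans ?_
  rw [gibbsSum_add β s W J (fun _ => ε) (fun σ => (2 * C / δ ^ 2) * sqFd s n m σ),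
    gibbsSum_const, gibbsSum_smul]

end TestFunctions

-- ### integral wrappers
def gibbsInt (β : ℝ) (ν : Measure (ℕ × ℕ → ℝ)) (s W : ℕ) (g : (Fin s → ℕ → Bool) → ℝ) : ℝ :=
  ∫ J, (∫ σ, g σ ∂(Measure.pi fun _ : Fin s => skGibbs W β J)) ∂ν

def kapInt (ν : Measure (ℕ × ℕ → ℝ)) (κ : (ℕ × ℕ → ℝ) → Measure (Measure (ℕ → Bool)))
    (s : ℕ) (g : (Fin s → ℕ → Bool) → ℝ) : ℝ :=
  ∫ J, (∫ Γ, (∫ σ, g σ ∂(Measure.pi fun _ : Fin s => Γ)) ∂(κ J)) ∂ν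

lemma gibbsInt_eq (β : ℝ) (ν : Measure (ℕ × ℕ → ℝ)) (s W : ℕ)
    (g : (Fin s → ℕ → Bool) → ℝ)
    (hg : ∀ σ σ', (∀ i, ∀ x, x < W → σ i x = σ' i x) → g σ = g σ') :
    gibbsInt β ν s W g = ∫ J, gibbsSum β s W J g ∂ν :=
  integral_congr_ae (.of_forall fun J => integral_pi_skGibbs β s W J g hg)

lemma kapInt_eq (ν : Measure (ℕ × ℕ → ℝ)) (κ : (ℕ × ℕ → ℝ) → Measure (Measure (ℕ → Bool)))
    (hκprob' : ∀ J, ∀ᵐ Γ ∂(κ J), IsProbabilityMeasure Γ) (s W : ℕ)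
    (g : (Fin s → ℕ → Bool) → ℝ)
    (hg : ∀ σ σ', (∀ i, ∀ x, x < W → σ i x = σ' i x) → g σ = g σ') :
    kapInt ν κ s g = ∫ J, (∫ Γ, SF s W g Γ ∂(κ J)) ∂ν := by
  refine integral_congr_ae (.of_forall fun J => ?_)
  refine integral_congr_ae ((hκprob' J).mono fun Γ hΓ => ?_)
  haveI := hΓ
  exact SF_eq s W g hg Γ

lemma integrable_kap_integrand (ν : Measure (ℕ × ℕ → ℝ)) [IsFiniteMeasure ν]
    (κ : (ℕ × ℕ → ℝ) → Measure (Measure (ℕ → Bool))) (hκmeas : Measurable κ)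
    (hκprob : ∀ J, IsProbabilityMeasure (κ J))
    (hκprob' : ∀ J, ∀ᵐ Γ ∂(κ J), IsProbabilityMeasure Γ) (s W : ℕ)
    (g : (Fin s → ℕ → Bool) → ℝ) {C : ℝ} (hC : ∀ σ, |g σ| ≤ C) :
    (∀ J, |∫ Γ, SF s W g Γ ∂(κ J)| ≤ C) ∧
      Integrable (fun J => ∫ Γ, SF s W g Γ ∂(κ J)) ν := by
  have hb : ∀ J, |∫ Γ, SF s W g Γ ∂(κ J)| ≤ C := by
    intro J
    haveI := hκprob J
    have := norm_integral_le_of_norm_le_const (μ := κ J) (f := fun Γ => SF s W g Γ) (C := C)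
      ((hκprob' J).mono fun Γ hΓ => by
        haveI := hΓ
        simpa [Real.norm_eq_abs] using abs_SF_le s W Γ hC)
    simpa [Real.norm_eq_abs, measure_univ] using this
  refine ⟨hb, ?_⟩
  refine Integrable.mono' (integrable_const C) ?_ (.of_forall fun J => ?_)
  · exact (measurable_kernel_integral κ hκmeas hκprob _ (measurable_SF s W g)).aestronglyMeasurable
  · simpa [Real.norm_eq_abs] using hb J

lemma integrable_SF_kap (κJ : Measure (Measure (ℕ → Bool))) [IsProbabilityMeasure κJ]
    (hprob : ∀ᵐ Γ ∂κJ, IsProbabilityMeasure Γ) (s W : ℕ)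
    (g : (Fin s → ℕ → Bool) → ℝ) {C : ℝ} (hC : ∀ σ, |g σ| ≤ C) :
    Integrable (fun Γ => SF s W g Γ) κJ := by
  refine Integrable.mono' (integrable_const C) (measurable_SF s W g).aestronglyMeasurable
    (hprob.mono fun Γ hΓ => ?_)
  haveI := hΓ
  simpa [Real.norm_eq_abs] using abs_SF_le s W Γ hC

-- Gibbs-side variance sum bound
lemma gibbs_sqFd_bound (β : ℝ) (ν : Measure (ℕ × ℕ → ℝ)) [IsProbabilityMeasure ν]
    (hν' : stdGaussianProduct' ν) (s : ℕ) {n m W : ℕ}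
    (hn : 1 ≤ n) (hnm : n ≤ m) (hmW : m ≤ W) (h2 : 2 ≤ W) :
    ∫ J, gibbsSum β s W J (sqFd s n m) ∂ν ≤ (Fintype.card (Pairs' s) : ℝ) * (2 / n) := by
  classical
  have hsq4 : ∀ (p : Pairs' s) (σ : Fin s → ℕ → Bool),
      |(overlapN m (σ p.1.1) (σ p.1.2) - overlapN n (σ p.1.1) (σ p.1.2))^2| ≤ 4 := by
    intro p σ
    have h1 := abs_overlapN_le m (σ p.1.1) (σ p.1.2)
    have h2 := abs_overlapN_le n (σ p.1.1) (σ p.1.2)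
    rw [abs_le] at h1 h2
    rw [abs_of_nonneg (sq_nonneg _)]
    nlinarith [h1.1, h1.2, h2.1, h2.2]
  have hexp : ∀ J, gibbsSum β s W J (sqFd s n m)
      = ∑ p : Pairs' s, gibbsSum β s W J
          (fun σ => (overlapN m (σ p.1.1) (σ p.1.2) - overlapN n (σ p.1.1) (σ p.1.2))^2) := by
    intro J
    have : sqFd s n m = fun σ => ∑ p : Pairs' s,
        (overlapN m (σ p.1.1) (σ p.1.2) - overlapN n (σ p.1.1) (σ p.1.2))^2 := rfl
    rw [this, gibbsSum_finset_sum]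
  rw [integral_congr_ae (.of_forall hexp)]
  rw [integral_finset_sum _ (fun p _ => integrable_gibbsSum β ν s W _ 4 (hsq4 p))]
  calc ∑ p : Pairs' s, ∫ J, gibbsSum β s W J
          (fun σ => (overlapN m (σ p.1.1) (σ p.1.2) - overlapN n (σ p.1.1) (σ p.1.2))^2) ∂ν
      ≤ ∑ _p : Pairs' s, 2 / (n : ℝ) := by
        refine Finset.sum_le_sum fun p _ => ?_
        exact var_bound β ν hν' s p.1.1 p.1.2 hn hnm hmW h2
    _ = (Fintype.card (Pairs' s) : ℝ) * (2 / n) := by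
        rw [Finset.sum_const, Finset.card_univ, nsmul_eq_mul]

lemma main_estimates (β : ℝ) (ν : Measure (ℕ × ℕ → ℝ)) [IsProbabilityMeasure ν]
    (hν' : stdGaussianProduct' ν)
    (κ : (ℕ × ℕ → ℝ) → Measure (Measure (ℕ → Bool))) (hκmeas : Measurable κ)
    (hκprob : ∀ J, IsProbabilityMeasure (κ J))
    (hκprob' : ∀ J, ∀ᵐ Γ ∂(κ J), IsProbabilityMeasure Γ)
    (Nf : ℕ → ℕ) (hNf : StrictMono Nf)
    {s : ℕ} {F : (Pairs' s → ℝ) → ℝ} (hF : ContinuousOn F (cube s))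
    {C : ℝ} (hC1 : 1 ≤ C) (hFb : ∀ u ∈ cube s, |F u| ≤ C)
    (hconvS : ∀ n m : ℕ, n ≤ m →
      Tendsto (fun k => gibbsInt β ν s (Nf k) (sqFd s n m)) atTop
        (nhds (kapInt ν κ s (sqFd s n m))))
    {ε : ℝ} (hε : 0 < ε) :
    ∃ n₀ : ℕ, 2 ≤ n₀ ∧ ∀ n, n₀ ≤ n →
      (∀ k, n ≤ Nf k → 2 ≤ Nf k →
        |gibbsInt β ν s (Nf k) (gFm s F (Nf k)) - gibbsInt β ν s (Nf k) (gFm s F n)| ≤ ε) ∧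
      (∀ m, n ≤ m → |kapInt ν κ s (gFm s F m) - kapInt ν κ s (gFm s F n)| ≤ ε) := by
  classical
  obtain ⟨δ, hδ, hmod⟩ := exists_F_modulus hF (half_pos hε)
  set P : ℝ := (Fintype.card (Pairs' s) : ℝ) with hP
  have hP0 : 0 ≤ P := Nat.cast_nonneg _
  set C2 : ℝ := 2 * C / δ ^ 2 with hC2
  have hC20 : 0 ≤ C2 := by positivity
  set K : ℝ := C2 * P * 2 with hK
  have hK0 : 0 ≤ K := by positivity
  obtain ⟨n₁, hn₁⟩ := exists_nat_gt (2 * K / ε)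
  refine ⟨max n₁ 2, le_max_right _ _, fun n hn => ?_⟩
  have hn2 : 2 ≤ n := le_trans (le_max_right _ _) hn
  have hn1 : 1 ≤ n := by omega
  have hnR : (0 : ℝ) < n := by exact_mod_cast (by omega : 0 < n)
  have htail : C2 * (P * (2 / n)) ≤ ε / 2 := by
    have hlt : 2 * K / ε < (n : ℝ) := by
      refine lt_of_lt_of_le hn₁ ?_
      exact_mod_cast le_trans (le_max_left _ _) hn
    have h2K : 2 * K < ε * n := by
      rw [div_lt_iff₀ hε] at hlt
      linarith
    have heq : C2 * (P * (2 / (n : ℝ))) = K / n := by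
      rw [hK]; ring
    rw [heq, div_le_iff₀ hnR]
    linarith
  constructor
  · -- Gibbs side
    intro k hnk h2k
    have hmk : n ≤ Nf k := hnk
    rw [gibbsInt_eq β ν s (Nf k) _ (gFm_window F le_rfl),
      gibbsInt_eq β ν s (Nf k) _ (gFm_window F hmk)]
    have hstep := integral_abs_diff_le ν
      (integrable_gibbsSum β ν s (Nf k) _ C (gFm_bound F hFb (Nf k)))
      (integrable_gibbsSum β ν s (Nf k) _ C (gFm_bound F hFb n))
      (integrable_gibbsSum β ν s (Nf k) _ (4 * P) (sqFd_bound n (Nf k)))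
      (Filter.Eventually.of_forall fun J =>
        gibbs_gFm_ptwise F hC1 hδ (half_pos hε) hFb hmod β n (Nf k) (Nf k) J)
    refine hstep.trans ?_
    have hvar := gibbs_sqFd_bound β ν hν' s hn1 hmk le_rfl h2k
    have := mul_le_mul_of_nonneg_left hvar hC20
    linarith
  · -- κ side
    intro m hnm
    rw [kapInt_eq ν κ hκprob' s m _ (gFm_window F le_rfl),
      kapInt_eq ν κ hκprob' s n _ (gFm_window F le_rfl)]
    -- per-J comparison
    have hJ : ∀ J, |(∫ Γ, SF s m (gFm s F m) Γ ∂(κ J)) - (∫ Γ, SF s n (gFm s F n) Γ ∂(κ J))|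
        ≤ ε / 2 + C2 * ∫ Γ, SF s m (sqFd s n m) Γ ∂(κ J) := by
      intro J
      haveI := hκprob J
      exact integral_abs_diff_le (κ J)
        (integrable_SF_kap (κ J) (hκprob' J) s m _ (gFm_bound F hFb m))
        (integrable_SF_kap (κ J) (hκprob' J) s n _ (gFm_bound F hFb n))
        (integrable_SF_kap (κ J) (hκprob' J) s m _ (sqFd_bound n m))
        ((hκprob' J).mono fun Γ hΓ => by
          haveI := hΓ
          exact SF_gFm_ptwise F hC1 hδ (half_pos hε) hFb hmod hnm Γ)
    have hIm := integrable_kap_integrand ν κ hκmeas hκprob hκprob' s m _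
      (gFm_bound F hFb m)
    have hIn := integrable_kap_integrand ν κ hκmeas hκprob hκprob' s n _
      (gFm_bound F hFb n)
    have hIsq := integrable_kap_integrand ν κ hκmeas hκprob hκprob' s m _
      (sqFd_bound (s := s) n m)
    have hstep := integral_abs_diff_le ν hIm.2 hIn.2 hIsq.2
      (Filter.Eventually.of_forall hJ)
    refine hstep.trans ?_
    -- the variance term
    have hV : ∫ J, (∫ Γ, SF s m (sqFd s n m) Γ ∂(κ J)) ∂ν ≤ P * (2 / n) := by
      have hVeq : kapInt ν κ s (sqFd s n m)
          = ∫ J, (∫ Γ, SF s m (sqFd s n m) Γ ∂(κ J)) ∂ν :=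
        kapInt_eq ν κ hκprob' s m _ (sqFd_window le_rfl hnm)
      rw [← hVeq]
      refine le_of_tendsto (hconvS n m hnm) ?_
      rw [Filter.eventually_atTop]
      refine ⟨max m 2, fun k hk => ?_⟩
      have hmk : m ≤ Nf k := le_trans (le_trans (le_max_left _ _) hk) hNf.le_apply
      have h2k : 2 ≤ Nf k := le_trans (le_trans (le_max_right _ _) hk) hNf.le_apply
      rw [gibbsInt_eq β ν s (Nf k) _ (sqFd_window hmk hnm)]
      exact gibbs_sqFd_bound β ν hν' s hn1 hnm hmk h2k
    have := mul_le_mul_of_nonneg_left hV hC20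
    linarith

/-- for the SK model, the "simultaneous-limit" ROSt agrees with the
metastate ROSt.  If along `(N_k)` the SK Gibbs measures converge to the metastate `κ_J` in
the sense of the metastate theorem, then for every `s` and every continuous `F`, the
simultaneous limit `lim_k ∫ν(dJ) G_{N_k,β,J}^{⊗s}(F(R^{N_k}(σ^i,σ^j)))` and the iterated
limit `lim_N ∫ν(dJ)∫κ_J(dΓ) Γ^{⊗s}(F(R^N(σ^i,σ^j)))` both exist and are equal. -/
theorem sk_rost_limits_agree (β : ℝ) (hβ : 0 < β)
    (ν : Measure (ℕ × ℕ → ℝ)) (hν : stdGaussianProduct ν)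
    (N : ℕ → ℕ) (hN : StrictMono N)
    (κ : (ℕ × ℕ → ℝ) → Measure (Measure (ℕ → Bool))) (hκmeas : Measurable κ)
    (hκprob : ∀ J, IsProbabilityMeasure (κ J))
    (hκprob' : ∀ J, ∀ᵐ Γ ∂(κ J), IsProbabilityMeasure Γ)
    -- convergence of the Gibbs measures to the metastate along (N_k)
    (hconv : ∀ (s : ℕ) (A : Finset (ℕ × ℕ)) (W : Finset ℕ)
      (f : (ℕ × ℕ → ℝ) → (Fin s → ℕ → Bool) → ℝ),
      Continuous (fun p : (ℕ × ℕ → ℝ) × (Fin s → ℕ → Bool) => f p.1 p.2) →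
      (∃ C, ∀ J σ, |f J σ| ≤ C) →
      (∀ J J' σ σ', (∀ e ∈ A, J e = J' e) →
        (∀ i : Fin s, ∀ x ∈ W, σ i x = σ' i x) → f J σ = f J' σ') →
      Tendsto
        (fun k => ∫ J, (∫ σ, f J σ ∂(Measure.pi fun _ : Fin s => skGibbs (N k) β J)) ∂ν)
        atTop
        (nhds (∫ J, (∫ Γ, (∫ σ, f J σ ∂(Measure.pi fun _ : Fin s => Γ)) ∂(κ J)) ∂ν))) :
    ∀ (s : ℕ) (F : (Pairs s → ℝ) → ℝ),
      ContinuousOn F {g : Pairs s → ℝ | ∀ p, g p ∈ Set.Icc (-1 : ℝ) 1} →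
      ∃ ℓ : ℝ,
        Tendsto
          (fun k => ∫ J,
            (∫ σ, F (fun p => overlapN (N k) (σ p.1.1) (σ p.1.2))
              ∂(Measure.pi fun _ : Fin s => skGibbs (N k) β J)) ∂ν)
          atTop (nhds ℓ) ∧
        Tendsto
          (fun M => ∫ J, (∫ Γ,
            (∫ σ, F (fun p => overlapN M (σ p.1.1) (σ p.1.2))
              ∂(Measure.pi fun _ : Fin s => Γ)) ∂(κ J)) ∂ν)
          atTop (nhds ℓ) := by
  intro s F hF
  classical
  haveI hνP : IsProbabilityMeasure ν := hν.1
  have hν' : stdGaussianProduct' ν := hν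
  have hF' : ContinuousOn F (cube s) := hF
  obtain ⟨C, hC1, hFb⟩ := exists_F_bound hF'
  have hconvF : ∀ n : ℕ, Tendsto (fun k => gibbsInt β ν s (N k) (gFm s F n)) atTop
      (nhds (kapInt ν κ s (gFm s F n))) := by
    intro n
    exact hconv s ∅ (Finset.range n) (fun _ σ => gFm s F n σ)
      ((gFm_continuous F hF' n).comp continuous_snd)
      ⟨C, fun _ σ => gFm_bound F hFb n σ⟩
      (fun J J' σ σ' _ hW => gFm_window F le_rfl σ σ'
        (fun i x hx => hW i x (Finset.mem_range.2 hx)))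
  have hconvS : ∀ n m : ℕ, n ≤ m →
      Tendsto (fun k => gibbsInt β ν s (N k) (sqFd s n m)) atTop
        (nhds (kapInt ν κ s (sqFd s n m))) := by
    intro n m hnm
    exact hconv s ∅ (Finset.range m) (fun _ σ => sqFd s n m σ)
      ((sqFd_continuous n m).comp continuous_snd)
      ⟨4 * (Fintype.card (Pairs' s) : ℝ), fun _ σ => sqFd_bound n m σ⟩
      (fun J J' σ σ' _ hW => sqFd_window le_rfl hnm σ σ'
        (fun i x hx => hW i x (Finset.mem_range.2 hx)))
  have hMain := fun (ε : ℝ) (hε : 0 < ε) => main_estimates β ν hν' κ hκmeas hκprob hκprob'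
    N hN hF' hC1 hFb hconvS hε
  set B : ℕ → ℝ := fun m => kapInt ν κ s (gFm s F m) with hBdef
  have hCauchy : CauchySeq B := by
    rw [Metric.cauchySeq_iff]
    intro ε hε
    obtain ⟨n₀, _, h⟩ := hMain (ε / 2) (half_pos hε)
    refine ⟨n₀, fun a ha b hb => ?_⟩
    have hhalf : ε / 2 < ε := by linarith
    rcases le_total a b with hab | hab
    · have := (h a ha).2 b hab
      rw [Real.dist_eq, abs_sub_comm]
      exact lt_of_le_of_lt this hhalf
    · have := (h b hb).2 a hab
      rw [Real.dist_eq]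
      exact lt_of_le_of_lt this hhalf
  obtain ⟨ℓ, hBl⟩ := cauchySeq_tendsto_of_complete hCauchy
  refine ⟨ℓ, ?_, hBl⟩
  rw [Metric.tendsto_atTop]
  intro ε hε
  have hε4 : 0 < ε / 4 := by linarith
  obtain ⟨n₀, _, h⟩ := hMain (ε / 4) hε4
  have hBn : |B n₀ - ℓ| ≤ ε / 4 := by
    have htd : Tendsto (fun m => |B m - B n₀|) atTop (nhds (|ℓ - B n₀|)) :=
      ((hBl.sub tendsto_const_nhds).abs)
    have hle : |ℓ - B n₀| ≤ ε / 4 := by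
      refine le_of_tendsto htd ?_
      rw [Filter.eventually_atTop]
      exact ⟨n₀, fun m hm => (h n₀ le_rfl).2 m hm⟩
    rwa [abs_sub_comm] at hle
  have hAn := hconvF n₀
  rw [Metric.tendsto_atTop] at hAn
  obtain ⟨K2, hK2⟩ := hAn (ε / 4) hε4
  refine ⟨max (max n₀ 2) K2, fun k hk => ?_⟩
  have hkk : max n₀ 2 ≤ k := le_trans (le_max_left _ _) hk
  have hk1 : n₀ ≤ N k := le_trans (le_trans (le_max_left _ _) hkk) hN.le_apply
  have hk2 : 2 ≤ N k := le_trans (le_trans (le_max_right _ _) hkk) hN.le_apply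
  have h1 : |gibbsInt β ν s (N k) (gFm s F (N k)) - gibbsInt β ν s (N k) (gFm s F n₀)|
      ≤ ε / 4 := (h n₀ le_rfl).1 k hk1 hk2
  have h2 : |gibbsInt β ν s (N k) (gFm s F n₀) - B n₀| < ε / 4 := by
    have := hK2 k (le_trans (le_max_right _ _) hk)
    rwa [Real.dist_eq] at this
  have hAeq : (∫ J,
      (∫ σ, F (fun p => overlapN (N k) (σ p.1.1) (σ p.1.2))
        ∂(Measure.pi fun _ : Fin s => skGibbs (N k) β J)) ∂ν)
      = gibbsInt β ν s (N k) (gFm s F (N k)) := rfl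
  rw [Real.dist_eq, hAeq]
  calc |gibbsInt β ν s (N k) (gFm s F (N k)) - ℓ|
      ≤ |gibbsInt β ν s (N k) (gFm s F (N k)) - gibbsInt β ν s (N k) (gFm s F n₀)|
        + |gibbsInt β ν s (N k) (gFm s F n₀) - B n₀| + |B n₀ - ℓ| := by
        have := abs_sub_le (gibbsInt β ν s (N k) (gFm s F (N k)))
          (gibbsInt β ν s (N k) (gFm s F n₀)) ℓ
        have h3 := abs_sub_le (gibbsInt β ν s (N k) (gFm s F n₀)) (B n₀) ℓ
        linarith
    _ < ε := by linarith
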